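/- Let A be a complex n×n matrix and suppose there exists a Hermitian positive-definite n×n matrix Y such that A* Y A = Y, where A* denotes the conjugate transpose. Then A is diagonalizable over ℂ and every eigenvalue of A has modulus 1. -/

import Mathlib

open Matrix
open scoped ComplexOrder

/-- If `A` is a complex square matrix and there is a Hermitian positive-definite matrix
`Y` with `Aᴴ Y A = Y` (i.e. the scattering matrix `A` is lossless), then `A` is
diagonalizable over ℂ and all its eigenvalues have modulus `1`. -/
theorem lossless_implies_diagonalizable_unit_eigenvalues (n : ℕ)
    (A Y : Matrix (Fin n) (Fin n) ℂ) (hY : Y.PosDef) (h : Aᴴ * Y * A = Y) :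
    (∃ (V : Matrix (Fin n) (Fin n) ℂ) (d : Fin n → ℂ),
      IsUnit V ∧ A = V⁻¹ * Matrix.diagonal d * V) ∧
    ∀ μ : ℂ, A.charpoly.IsRoot μ → ‖μ‖ = 1 := by
  classical
  -- the Y-inner product
  set Q : (Fin n → ℂ) → (Fin n → ℂ) → ℂ := fun x y => star x ⬝ᵥ Y *ᵥ y with hQ
  have hpres : ∀ x y, Q (A *ᵥ x) (A *ᵥ y) = Q x y := by
    intro x y
    simp only [hQ]
    rw [star_mulVec, mulVec_mulVec, ← dotProduct_mulVec, mulVec_mulVec, ← Matrix.mul_assoc, h]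
  have hpos : ∀ x, x ≠ 0 → Q x x ≠ 0 := fun x hx => (hY.dotProduct_mulVec_pos hx).ne'
  -- eigenvalues have modulus one
  have hconj : ∀ μ : ℂ, ∀ v, v ≠ 0 → A *ᵥ v = μ • v → starRingEnd ℂ μ * μ = 1 := by
    intro μ v hv hAv
    have hsm : Q (μ • v) (μ • v) = (starRingEnd ℂ μ * μ) * Q v v := by
      simp only [hQ]
      simp [star_smul, mulVec_smul, smul_dotProduct, dotProduct_smul, mul_assoc,
        Complex.star_def, mul_left_comm]
    have h1 : Q v v = (starRingEnd ℂ μ * μ) * Q v v := by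
      conv_lhs => rw [← hpres v v, hAv, hsm]
    have h2 : (starRingEnd ℂ μ * μ - 1) * Q v v = 0 := by linear_combination -h1
    rcases mul_eq_zero.mp h2 with h0 | h0
    · exact sub_eq_zero.mp h0
    · exact absurd h0 (hpos v hv)
  have habs : ∀ μ : ℂ, ∀ v, v ≠ 0 → A *ᵥ v = μ • v → ‖μ‖ = 1 := by
    intro μ v hv hAv
    have h1 := hconj μ v hv hAv
    have h2' : (Complex.normSq μ : ℂ) = 1 := by
      rw [Complex.normSq_eq_conj_mul_self, h1]
    have h2 : Complex.normSq μ = 1 := by exact_mod_cast h2'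
    have := Complex.sq_norm μ
    nlinarith [norm_nonneg μ]
  -- generalized eigenvectors of order 2 are eigenvectors
  have hker2 : ∀ μ : ℂ, ∀ v : Fin n → ℂ,
      A *ᵥ (A *ᵥ v - μ • v) = μ • (A *ᵥ v - μ • v) → A *ᵥ v = μ • v := by
    intro μ v hvw
    set w := A *ᵥ v - μ • v with hw
    by_contra hne
    have hw0 : w ≠ 0 := by
      intro h0; apply hne; rw [← sub_eq_zero]; exact h0
    have hμ1 := hconj μ w hw0 hvw
    have hμ0 : μ ≠ 0 := by
      intro h0; rw [h0] at hμ1; simp at hμ1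
    have hAv : A *ᵥ v = μ • v + w := by rw [hw]; abel
    have key : Q v w = Q v w + μ * Q w w := by
      conv_lhs => rw [← hpres v w, hAv, hvw]
      simp only [hQ]
      simp [star_add, star_smul, mulVec_smul, add_dotProduct, smul_dotProduct,
        dotProduct_smul, Complex.star_def, mul_assoc, mul_left_comm, mul_comm]
      linear_combination (star v ⬝ᵥ Y *ᵥ w) * hμ1
    have : μ * Q w w = 0 := by linear_combination key.symm
    rcases mul_eq_zero.mp this with h0 | h0
    · exact hμ0 h0
    · exact hpos w hw0 h0
  -- the associated endomorphism
  set f : Module.End ℂ (Fin n → ℂ) := Matrix.mulVecLin A with hf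
  have hg : ∀ (μ : ℂ) (x : Fin n → ℂ),
      (f - μ • (1 : Module.End ℂ (Fin n → ℂ))) x = A *ᵥ x - μ • x := by
    intro μ x
    simp [hf, Matrix.mulVecLin_apply]
  have hker : ∀ μ : ℂ, LinearMap.ker ((f - μ • 1) ^ 1) = LinearMap.ker ((f - μ • 1) ^ 2) := by
    intro μ
    refine le_antisymm ?_ ?_
    · intro x hx
      simp only [LinearMap.mem_ker, pow_one, pow_two, Module.End.mul_apply] at hx ⊢
      rw [hx, map_zero]
    · intro x hx
      simp only [LinearMap.mem_ker, pow_one, pow_two, Module.End.mul_apply, hg] at hx ⊢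
      rw [sub_eq_zero] at hx ⊢
      exact hker2 μ x hx
  have hmax : ∀ μ : ℂ, f.maxGenEigenspace μ = f.eigenspace μ := by
    intro μ
    refine le_antisymm ?_ ((f.genEigenspace μ).monotone le_top)
    intro x hx
    obtain ⟨k, hk⟩ := (Module.End.mem_maxGenEigenspace f μ x).mp hx
    suffices hs : (f - μ • 1) x = 0 by
      rw [Module.End.mem_eigenspace_iff, ← sub_eq_zero]
      simpa using hs
    cases k with
    | zero =>
      simp only [pow_zero, Module.End.one_apply] at hk
      rw [hk, map_zero]
    | succ m =>
      have h1 : LinearMap.ker ((f - μ • 1) ^ 1) = LinearMap.ker ((f - μ • 1) ^ (1 + m)) :=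
        Module.End.ker_pow_constant (hker μ) m
      have hx' : x ∈ LinearMap.ker ((f - μ • 1) ^ (1 + m)) := by
        rw [add_comm]
        exact hk
      rw [← h1, LinearMap.mem_ker, pow_one] at hx'
      exact hx'
  have hsupe : ⨆ μ : ℂ, f.eigenspace μ = ⊤ := by
    have := f.iSup_maxGenEigenspace_eq_top
    simp_rw [hmax] at this
    exact this
  have hInt : DirectSum.IsInternal (fun μ : ℂ => f.eigenspace μ) :=
    DirectSum.isInternal_submodule_of_iSupIndep_of_iSup_eq_top f.eigenspaces_iSupIndep hsupe
  let v : ∀ μ : ℂ, Module.Basis (Module.Free.ChooseBasisIndex ℂ (f.eigenspace μ)) ℂ (f.eigenspace μ) :=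
    fun μ => Module.Free.chooseBasis ℂ _
  let b₀ := hInt.collectedBasis v
  let e := b₀.indexEquiv (Pi.basisFun ℂ (Fin n))
  let b := b₀.reindex e
  let d : Fin n → ℂ := fun i => (e.symm i).1
  have hb : ∀ i, A *ᵥ (b i) = d i • (b i) := by
    intro i
    have hmem : b i ∈ f.eigenspace (e.symm i).1 := by
      rw [Module.Basis.reindex_apply]
      exact hInt.collectedBasis_mem v _
    have h2 := Module.End.mem_eigenspace_iff.mp hmem
    simpa [hf, Matrix.mulVecLin_apply] using h2
  set P : Matrix (Fin n) (Fin n) ℂ := Matrix.of (fun i j => b j i) with hP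
  have hPb : P = (Pi.basisFun ℂ (Fin n)).toMatrix b := by
    ext i j
    simp [hP, Module.Basis.toMatrix_apply, Pi.basisFun_repr]
  have hPu : IsUnit P := by
    rw [hPb]
    letI := (Pi.basisFun ℂ (Fin n)).invertibleToMatrix b
    exact isUnit_of_invertible _
  have hPdet : IsUnit P.det := (Matrix.isUnit_iff_isUnit_det P).mp hPu
  have hAP : A * P = P * Matrix.diagonal d := by
    ext i j
    have h1 : (A * P) i j = (A *ᵥ b j) i := by
      simp [Matrix.mul_apply, Matrix.mulVec, dotProduct, hP]
    rw [h1, hb j, Matrix.mul_diagonal]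
    rw [Pi.smul_apply, smul_eq_mul, hP, of_apply, mul_comm]
  constructor
  · refine ⟨P⁻¹, d, Matrix.isUnit_nonsing_inv_iff.mpr hPu, ?_⟩
    rw [Matrix.nonsing_inv_nonsing_inv P hPdet, ← hAP,
      Matrix.mul_nonsing_inv_cancel_right P A hPdet]
  · intro μ hroot
    have hdet : (Matrix.scalar (Fin n) μ - A).det = 0 := by
      have h1 : ((A.charmatrix).map (Polynomial.evalRingHom μ)).det = 0 := by
        rw [show (A.charmatrix).map ⇑(Polynomial.evalRingHom μ)
            = (Polynomial.evalRingHom μ).mapMatrix A.charmatrix from rfl, ← RingHom.map_det]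
        exact hroot
      rw [← h1]
      congr 1
      ext i j
      by_cases hij : i = j
      · subst hij
        simp [Matrix.charmatrix_apply_eq]
      · simp [Matrix.charmatrix_apply_ne _ _ _ hij, Matrix.scalar_apply,
          Matrix.diagonal_apply_ne _ hij]
    obtain ⟨w, hw0, hw⟩ := Matrix.exists_mulVec_eq_zero_iff.mpr hdet
    have hAw : A *ᵥ w = μ • w := by
      rw [Matrix.sub_mulVec, sub_eq_zero] at hw
      rw [← hw]
      funext i
      simp [Matrix.scalar_apply, Matrix.mulVec_diagonal]
    exact habs μ w hw0 hAw
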